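/- arXiv:1903.07837 — 9 statements merged into one kernel-verified Lean document; each statement's English description precedes it below -/
import Mathlib

section
/- Let M = (Q, n1, n2, ⇒, q0, qf, I) be a two-counter Minsky machine and let (A, R, Rp, A0, ↪) be its APA encoding. For all q, q' ∈ Q, all m1, m2, m1', m2' ∈ ℕ and all k ∈ ℕ, if ⇒^k((q, m1, m2)) = (q', m1', m2'), then there exists a finite sequence of APA transitions (each with respect to an arbitrary reference set Ax ⊆ A) from the state F(A^I ∪ {σQ(q), σ1(m1), σ2(m2)}) to the state F(A^I ∪ {σQ(q'), σ1(m1'), σ2(m2')}). In particular, the APA encoding simulates M. -/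
/-- A two-counter Minsky machine over a state type `Q`.  An instruction
`(q1, i, q2, u)` has source state `q1 ≠ qf`, counter index `i ∈ {1,2}`,
target state `q2` and optional alternative target `u : Option Q`
(`none` playing the role of `ε`). -/
structure Minsky (Q : Type*) where
  n1 : ℕ
  n2 : ℕ
  q0 : Q
  qf : Q
  I : Set (Q × ℕ × Q × Option Q)
  I_idx : ∀ x ∈ I, x.2.1 = 1 ∨ x.2.1 = 2
  I_src : ∀ x ∈ I, x.1 ≠ qf
  I_total : ∀ q : Q, q ≠ qf → ∃ i q2 u, (q, i, q2, u) ∈ I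

/-- The one-step relation `⇒` of a two-counter Minsky machine. -/
inductive Minsky.Step {Q : Type*} (M : Minsky Q) : Q × ℕ × ℕ → Q × ℕ × ℕ → Prop
  | inc1 {q1 q2 : Q} {m1 m2 : ℕ} : (q1, 1, q2, (none : Option Q)) ∈ M.I →
      M.Step (q1, m1, m2) (q2, m1 + 1, m2)
  | inc2 {q1 q2 : Q} {m1 m2 : ℕ} : (q1, 2, q2, (none : Option Q)) ∈ M.I →
      M.Step (q1, m1, m2) (q2, m1, m2 + 1)
  | dec1 {q1 q2 q3 : Q} {m1 m2 : ℕ} : (q1, 1, q2, some q3) ∈ M.I → 0 < m1 →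
      M.Step (q1, m1, m2) (q3, m1 - 1, m2)
  | dec2 {q1 q2 q3 : Q} {m1 m2 : ℕ} : (q1, 2, q2, some q3) ∈ M.I → 0 < m2 →
      M.Step (q1, m1, m2) (q3, m1, m2 - 1)
  | zero1 {q1 q2 q3 : Q} {m2 : ℕ} : (q1, 1, q2, some q3) ∈ M.I →
      M.Step (q1, 0, m2) (q2, 0, m2)
  | zero2 {q1 q2 q3 : Q} {m1 : ℕ} : (q1, 2, q2, some q3) ∈ M.I →
      M.Step (q1, m1, 0) (q2, m1, 0)

/-- `M.StepN k c c'` says `⇒^k(c) = c'`, i.e. `c'` is obtained from `c`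
by exactly `k` Minsky machine steps. -/
def Minsky.StepN {Q : Type*} (M : Minsky Q) : ℕ → Q × ℕ × ℕ → Q × ℕ × ℕ → Prop
  | 0, c, c' => c = c'
  | k + 1, c, c' => ∃ c'', M.Step c c'' ∧ M.StepN k c'' c'

/-- An Abstract Persuasion Argumentation framework over the argument type `α`:
an attack relation `R`, a persuasion relation `Rp ⊆ A × (A ∪ {ε}) × A`
(`none` playing the role of `ε`), and an initial set `A0`.
A state `F(A1)` is identified with the set `A1 ⊆ A` of visible arguments
(since the state is `(A1, R ∩ (A1 × A1))`, a function of `A1`). -/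
structure APA (α : Type*) where
  R : Set (α × α)
  Rp : Set (α × Option α × α)
  A0 : Set α

namespace APA

variable {α : Type*} (F : APA α)

/-- `a1` attacks `a2` in the state `F(A1)`. -/
def Attacks (A1 : Set α) (a1 a2 : α) : Prop :=
  a1 ∈ A1 ∧ a2 ∈ A1 ∧ (a1, a2) ∈ F.R

/-- `Γ^{Ax}_{F(A1)}`: members `(a1, α, a2)` of `Rp` with `a1 ∈ A1`,
`α ∈ {ε} ∪ A1`, and `a1` not attacked in `F(A1)` by any member of `Ax`. -/
def gamma (Ax A1 : Set α) : Set (α × Option α × α) :=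
  {t | t ∈ F.Rp ∧ t.1 ∈ A1 ∧ (∀ a : α, t.2.1 = some a → a ∈ A1) ∧
    ∀ b ∈ Ax, ¬ F.Attacks A1 b t.1}

/-- `neg^{A1}(Γ)`. -/
def neg (A1 : Set α) (Γ : Set (α × Option α × α)) : Set α :=
  {ax | ax ∈ A1 ∧ ∃ a1 ∈ A1, ∃ a2 : α, (a1, some ax, a2) ∈ Γ}

/-- `pos^{A1}(Γ)`. -/
def pos (A1 : Set α) (Γ : Set (α × Option α × α)) : Set α :=
  {a2 | ∃ a1 ∈ A1, ∃ m : Option α, (∀ a : α, m = some a → a ∈ A1) ∧ (a1, m, a2) ∈ Γ}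

/-- The transition `F(A1) ↪^{Ax} F(A2)` effected by the specific nonempty
`Γ ⊆ Γ^{Ax}_{F(A1)}`. -/
def TransVia (Ax : Set α) (Γ : Set (α × Option α × α)) (A1 A2 : Set α) : Prop :=
  Γ.Nonempty ∧ Γ ⊆ F.gamma Ax A1 ∧ A2 = (A1 \ neg A1 Γ) ∪ pos A1 Γ

/-- The transition relation `F(A1) ↪^{Ax} F(A2)`. -/
def Trans (Ax A1 A2 : Set α) : Prop :=
  ∃ Γ : Set (α × Option α × α), F.TransVia Ax Γ A1 A2

/-- A state `F(A1)` is reachable iff it is obtained from the initial state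
`F(A0)` by a finite sequence of transitions (with arbitrary reference sets). -/
def Reachable (A1 : Set α) : Prop :=
  Relation.ReflTransGen (fun X Y => ∃ Ax : Set α, F.Trans Ax X Y) F.A0 A1

end APA

/-- `sigC σ1 σ2 i` is `σi` for `i ∈ {1, 2}`. -/
def sigC {α : Type*} (σ1 σ2 : ℕ → α) (i : ℕ) : ℕ → α :=
  if i = 1 then σ1 else σ2

/-- The persuasion relation of the APA encoding of a Minsky machine `M`. -/
def encRp {Q α : Type*} (M : Minsky Q) (σ1 σ2 : ℕ → α) (σQ : Q → α)
    (σI σIc : M.I → α) : Set (α × Option α × α) :=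
  {t | (∃ x : M.I, t = (σI x, some (σQ x.val.1), σIc x)) ∨
    (∃ x : M.I, ∃ n : ℕ, x.val.2.2.2 = none ∧
      t = (σIc x, some (sigC σ1 σ2 x.val.2.1 n), sigC σ1 σ2 x.val.2.1 (n + 1))) ∨
    (∃ x : M.I, ∃ n : ℕ, 1 ≤ n ∧ (∃ q3 : Q, x.val.2.2.2 = some q3) ∧
      t = (σIc x, some (sigC σ1 σ2 x.val.2.1 n), sigC σ1 σ2 x.val.2.1 (n - 1))) ∨
    (∃ x : M.I, ∃ n : ℕ, x.val.2.2.2 = none ∧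
      t = (sigC σ1 σ2 x.val.2.1 n, some (σIc x), σQ x.val.2.2.1)) ∨
    (∃ x : M.I, ∃ n : ℕ, 1 ≤ n ∧ ∃ q3 : Q, x.val.2.2.2 = some q3 ∧
      t = (sigC σ1 σ2 x.val.2.1 n, some (σIc x), σQ q3)) ∨
    (∃ x : M.I, ∃ q3 : Q, x.val.2.2.2 = some q3 ∧
      t = (sigC σ1 σ2 x.val.2.1 0, some (σIc x), σQ x.val.2.2.1))}

/-- The APA encoding of a two-counter Minsky machine `M`, over the argument
type `α` (playing the role of the class `A` of arguments): injective maps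
`σ1, σ2, σQ, σI, σIc` with pairwise disjoint ranges covering `α`, an empty
attack relation, the persuasion relation `encRp`, and the initial set
`{σ1 n1, σ2 n2, σQ q0} ∪ A^I`. -/
structure Encoding {Q : Type*} (M : Minsky Q) (α : Type*) extends APA α where
  σ1 : ℕ → α
  σ2 : ℕ → α
  σQ : Q → α
  σI : M.I → α
  σIc : M.I → α
  inj1 : Function.Injective σ1
  inj2 : Function.Injective σ2
  injQ : Function.Injective σQ
  injI : Function.Injective σI
  injIc : Function.Injective σIc
  disjoint_ranges : List.Pairwise Disjoint
    [Set.range σ1, Set.range σ2, Set.range σQ, Set.range σI, Set.range σIc]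
  ranges_cover : Set.range σ1 ∪ Set.range σ2 ∪ Set.range σQ ∪
    Set.range σI ∪ Set.range σIc = Set.univ
  R_empty : toAPA.R = ∅
  Rp_spec : toAPA.Rp = encRp M σ1 σ2 σQ σI σIc
  A0_spec : toAPA.A0 = {σ1 M.n1, σ2 M.n2, σQ M.q0} ∪ Set.range σI

/-- The set of visible arguments of the APA state `F(A^I ∪ {σQ q, σ1 m1, σ2 m2})`
corresponding to the Minsky machine configuration `(q, m1, m2)`. -/
def encState {Q α : Type*} {M : Minsky Q} (E : Encoding M α)
    (q : Q) (m1 m2 : ℕ) : Set α :=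
  Set.range E.σI ∪ {E.σQ q, E.σ1 m1, E.σ2 m2}

/-- The set of visible arguments of the intermediate APA state
`F(A^I ∪ {σIc x, σ1 m1, σ2 m2})`. -/
def encStateC {Q α : Type*} {M : Minsky Q} (E : Encoding M α)
    (x : M.I) (m1 m2 : ℕ) : Set α :=
  Set.range E.σI ∪ {E.σIc x, E.σ1 m1, E.σ2 m2}

section Aux

variable {Q α : Type*} {M : Minsky Q} (E : Encoding M α)

lemma rne {β γ : Type*} {f : β → α} {g : γ → α}
    (d : Disjoint (Set.range f) (Set.range g)) (n : β) (m : γ) : f n ≠ g m :=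
  fun h => Set.disjoint_left.mp d ⟨n, rfl⟩ ⟨m, h.symm⟩

lemma enc_no_attacks (A1 : Set α) (b a : α) : ¬ E.toAPA.Attacks A1 b a := by
  simp [APA.Attacks, E.R_empty]

lemma enc_trans_single (Ax : Set α) (a1 ax a2 : α) (other : Set α)
    (hRp : (a1, some ax, a2) ∈ E.toAPA.Rp)
    (ha1 : a1 ∈ other) (hax : ax ∉ other) :
    E.toAPA.Trans Ax (other ∪ {ax}) (other ∪ {a2}) := by
  refine ⟨{(a1, some ax, a2)}, ⟨_, rfl⟩, ?_, ?_⟩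
  · rintro t ht
    rw [Set.mem_singleton_iff] at ht
    subst ht
    refine ⟨hRp, Or.inl ha1, ?_, fun b _ => enc_no_attacks E _ _ _⟩
    rintro a ha
    cases Option.some.inj ha
    exact Or.inr rfl
  · have hneg : APA.neg (other ∪ {ax}) {((a1, some ax, a2) : α × Option α × α)}
        = {ax} := by
      ext b
      simp only [APA.neg, Set.mem_setOf_eq, Set.mem_singleton_iff, Set.mem_union,
        Prod.mk.injEq, Option.some.injEq]
      constructor
      · rintro ⟨-, c, -, d, -, rfl, -⟩; rfl
      · rintro rfl
        exact ⟨Or.inr rfl, a1, Or.inl ha1, a2, rfl, rfl, rfl⟩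
    have hpos : APA.pos (other ∪ {ax}) {((a1, some ax, a2) : α × Option α × α)}
        = {a2} := by
      ext b
      simp only [APA.pos, Set.mem_setOf_eq, Set.mem_singleton_iff, Set.mem_union,
        Prod.mk.injEq, Option.some.injEq]
      constructor
      · rintro ⟨c, -, m, -, -, -, rfl⟩; rfl
      · rintro rfl
        refine ⟨a1, Or.inl ha1, some ax, ?_, rfl, rfl, rfl⟩
        rintro b hb
        cases Option.some.inj hb
        exact Or.inr rfl
    rw [hneg, hpos]
    ext b
    simp only [Set.mem_union, Set.mem_diff, Set.mem_singleton_iff]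
    constructor
    · rintro (hb | rfl)
      · exact Or.inl ⟨Or.inl hb, fun h => hax (h ▸ hb)⟩
      · exact Or.inr rfl
    · rintro (⟨hb | rfl, hn⟩ | rfl)
      · exact Or.inl hb
      · exact absurd rfl hn
      · exact Or.inr rfl

lemma enc_trans_pair (Ax : Set α) (u v w z : α) (other : Set α)
    (hRp1 : (u, some v, w) ∈ E.toAPA.Rp) (hRp2 : (v, some u, z) ∈ E.toAPA.Rp)
    (hu : u ∉ other) (hv : v ∉ other) :
    E.toAPA.Trans Ax (other ∪ {u, v}) (other ∪ {w, z}) := by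
  have hmemu : u ∈ other ∪ {u, v} := Or.inr (Or.inl rfl)
  have hmemv : v ∈ other ∪ {u, v} := Or.inr (Or.inr rfl)
  refine ⟨{(u, some v, w), (v, some u, z)}, ⟨_, Or.inl rfl⟩, ?_, ?_⟩
  · rintro t ht
    rcases ht with rfl | ht
    · refine ⟨hRp1, hmemu, ?_, fun b _ => enc_no_attacks E _ _ _⟩
      rintro a ha; cases Option.some.inj ha; exact hmemv
    · rw [Set.mem_singleton_iff] at ht
      subst ht
      refine ⟨hRp2, hmemv, ?_, fun b _ => enc_no_attacks E _ _ _⟩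
      rintro a ha; cases Option.some.inj ha; exact hmemu
  · have hneg : APA.neg (other ∪ {u, v})
        {((u, some v, w) : α × Option α × α), (v, some u, z)} = {u, v} := by
      ext b
      simp only [APA.neg, Set.mem_setOf_eq, Set.mem_insert_iff,
        Set.mem_singleton_iff, Set.mem_union, Prod.mk.injEq, Option.some.injEq]
      constructor
      · rintro ⟨-, c, -, d, (⟨-, rfl, -⟩ | ⟨-, rfl, -⟩)⟩
        · exact Or.inr rfl
        · exact Or.inl rfl
      · rintro (rfl | rfl)
        · exact ⟨Or.inr (Or.inl rfl), v, hmemv, z, Or.inr ⟨rfl, rfl, rfl⟩⟩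
        · exact ⟨Or.inr (Or.inr rfl), u, hmemu, w, Or.inl ⟨rfl, rfl, rfl⟩⟩
    have hpos : APA.pos (other ∪ {u, v})
        {((u, some v, w) : α × Option α × α), (v, some u, z)} = {w, z} := by
      ext b
      simp only [APA.pos, Set.mem_setOf_eq, Set.mem_insert_iff,
        Set.mem_singleton_iff, Set.mem_union, Prod.mk.injEq, Option.some.injEq]
      constructor
      · rintro ⟨c, -, m, -, (⟨-, -, rfl⟩ | ⟨-, -, rfl⟩)⟩
        · exact Or.inl rfl
        · exact Or.inr rfl
      · rintro (rfl | rfl)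
        · refine ⟨u, hmemu, some v, ?_, Or.inl ⟨rfl, rfl, rfl⟩⟩
          rintro c hc
          cases Option.some.inj hc
          exact Or.inr (Or.inr rfl)
        · refine ⟨v, hmemv, some u, ?_, Or.inr ⟨rfl, rfl, rfl⟩⟩
          rintro c hc
          cases Option.some.inj hc
          exact Or.inr (Or.inl rfl)
    rw [hneg, hpos]
    ext b
    simp only [Set.mem_union, Set.mem_diff, Set.mem_insert_iff,
      Set.mem_singleton_iff]
    constructor
    · rintro (hb | rfl | rfl)
      · exact Or.inl ⟨Or.inl hb, fun h => h.elim (fun h => hu (h ▸ hb))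
          (fun h => hv (h ▸ hb))⟩
      · exact Or.inr (Or.inl rfl)
      · exact Or.inr (Or.inr rfl)
    · rintro (⟨hb | rfl | rfl, hn⟩ | rfl | rfl)
      · exact Or.inl hb
      · exact absurd (Or.inl rfl) hn
      · exact absurd (Or.inr rfl) hn
      · exact Or.inr (Or.inl rfl)
      · exact Or.inr (Or.inr rfl)

lemma enc_disj :
    Disjoint (Set.range E.σ1) (Set.range E.σ2) ∧
    Disjoint (Set.range E.σ1) (Set.range E.σQ) ∧
    Disjoint (Set.range E.σ1) (Set.range E.σI) ∧
    Disjoint (Set.range E.σ1) (Set.range E.σIc) ∧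
    Disjoint (Set.range E.σ2) (Set.range E.σQ) ∧
    Disjoint (Set.range E.σ2) (Set.range E.σI) ∧
    Disjoint (Set.range E.σ2) (Set.range E.σIc) ∧
    Disjoint (Set.range E.σQ) (Set.range E.σI) ∧
    Disjoint (Set.range E.σQ) (Set.range E.σIc) ∧
    Disjoint (Set.range E.σI) (Set.range E.σIc) := by
  have hd := E.disjoint_ranges
  simp only [List.pairwise_cons, List.mem_cons, List.mem_singleton,
    List.not_mem_nil, or_false, forall_eq_or_imp, forall_eq,
    List.Pairwise.nil] at hd
  tauto

lemma mem_Rp_i (x : M.I) :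
    (E.σI x, some (E.σQ x.val.1), E.σIc x) ∈ E.toAPA.Rp := by
  rw [E.Rp_spec]; exact Or.inl ⟨x, rfl⟩

lemma enc_trans_toC (Ax : Set α) (x : M.I) (m1 m2 : ℕ) :
    E.toAPA.Trans Ax (encState E x.val.1 m1 m2) (encStateC E x m1 m2) := by
  obtain ⟨d12, d1Q, d1I, d1Ic, d2Q, d2I, d2Ic, dQI, dQIc, dIIc⟩ := enc_disj E
  have hs : encState E x.val.1 m1 m2
      = (Set.range E.σI ∪ {E.σ1 m1, E.σ2 m2}) ∪ {E.σQ x.val.1} := by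
    ext b
    simp only [encState, Set.mem_union, Set.mem_insert_iff, Set.mem_singleton_iff]
    tauto
  have hc : encStateC E x m1 m2
      = (Set.range E.σI ∪ {E.σ1 m1, E.σ2 m2}) ∪ {E.σIc x} := by
    ext b
    simp only [encStateC, Set.mem_union, Set.mem_insert_iff, Set.mem_singleton_iff]
    tauto
  rw [hs, hc]
  refine enc_trans_single E Ax _ _ _ _ (mem_Rp_i E x) (Or.inl ⟨x, rfl⟩) ?_
  rintro (⟨y, hy⟩ | h | h)
  · exact rne dQI x.val.1 y hy.symm
  · exact rne d1Q m1 x.val.1 h.symm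
  · exact rne d2Q m2 x.val.1 h.symm

lemma enc_sim_count1 (Ax : Set α) (x : M.I) (m1 m1' m2 : ℕ) (qt : Q)
    (h1 : (E.σIc x, some (E.σ1 m1), E.σ1 m1') ∈ E.toAPA.Rp)
    (h2 : (E.σ1 m1, some (E.σIc x), E.σQ qt) ∈ E.toAPA.Rp) :
    Relation.ReflTransGen (E.toAPA.Trans Ax)
      (encState E x.val.1 m1 m2) (encState E qt m1' m2) := by
  obtain ⟨d12, d1Q, d1I, d1Ic, d2Q, d2I, d2Ic, dQI, dQIc, dIIc⟩ := enc_disj E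
  refine Relation.ReflTransGen.head (enc_trans_toC E Ax x m1 m2)
    (Relation.ReflTransGen.single ?_)
  have hc : encStateC E x m1 m2
      = (Set.range E.σI ∪ {E.σ2 m2}) ∪ {E.σIc x, E.σ1 m1} := by
    ext b
    simp only [encStateC, Set.mem_union, Set.mem_insert_iff, Set.mem_singleton_iff]
    tauto
  have hs : encState E qt m1' m2
      = (Set.range E.σI ∪ {E.σ2 m2}) ∪ {E.σ1 m1', E.σQ qt} := by
    ext b
    simp only [encState, Set.mem_union, Set.mem_insert_iff, Set.mem_singleton_iff]
    tauto
  rw [hc, hs]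
  refine enc_trans_pair E Ax _ _ _ _ _ h1 h2 ?_ ?_
  · rintro (⟨y, hy⟩ | h)
    · exact rne dIIc y x hy
    · exact rne d2Ic m2 x h.symm
  · rintro (⟨y, hy⟩ | h)
    · exact rne d1I m1 y hy.symm
    · exact rne d12 m1 m2 h

lemma enc_sim_count2 (Ax : Set α) (x : M.I) (m1 m2 m2' : ℕ) (qt : Q)
    (h1 : (E.σIc x, some (E.σ2 m2), E.σ2 m2') ∈ E.toAPA.Rp)
    (h2 : (E.σ2 m2, some (E.σIc x), E.σQ qt) ∈ E.toAPA.Rp) :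
    Relation.ReflTransGen (E.toAPA.Trans Ax)
      (encState E x.val.1 m1 m2) (encState E qt m1 m2') := by
  obtain ⟨d12, d1Q, d1I, d1Ic, d2Q, d2I, d2Ic, dQI, dQIc, dIIc⟩ := enc_disj E
  refine Relation.ReflTransGen.head (enc_trans_toC E Ax x m1 m2)
    (Relation.ReflTransGen.single ?_)
  have hc : encStateC E x m1 m2
      = (Set.range E.σI ∪ {E.σ1 m1}) ∪ {E.σIc x, E.σ2 m2} := by
    ext b
    simp only [encStateC, Set.mem_union, Set.mem_insert_iff, Set.mem_singleton_iff]
    tauto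
  have hs : encState E qt m1 m2'
      = (Set.range E.σI ∪ {E.σ1 m1}) ∪ {E.σ2 m2', E.σQ qt} := by
    ext b
    simp only [encState, Set.mem_union, Set.mem_insert_iff, Set.mem_singleton_iff]
    tauto
  rw [hc, hs]
  refine enc_trans_pair E Ax _ _ _ _ _ h1 h2 ?_ ?_
  · rintro (⟨y, hy⟩ | h)
    · exact rne dIIc y x hy
    · exact rne d1Ic m1 x h.symm
  · rintro (⟨y, hy⟩ | h)
    · exact rne d2I m2 y hy.symm
    · exact rne d12 m1 m2 h.symm

lemma enc_sim_zero1 (Ax : Set α) (x : M.I) (m2 : ℕ) (qt : Q)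
    (h2 : (E.σ1 0, some (E.σIc x), E.σQ qt) ∈ E.toAPA.Rp) :
    Relation.ReflTransGen (E.toAPA.Trans Ax)
      (encState E x.val.1 0 m2) (encState E qt 0 m2) := by
  obtain ⟨d12, d1Q, d1I, d1Ic, d2Q, d2I, d2Ic, dQI, dQIc, dIIc⟩ := enc_disj E
  refine Relation.ReflTransGen.head (enc_trans_toC E Ax x 0 m2)
    (Relation.ReflTransGen.single ?_)
  have hc : encStateC E x 0 m2
      = (Set.range E.σI ∪ {E.σ1 0, E.σ2 m2}) ∪ {E.σIc x} := by
    ext b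
    simp only [encStateC, Set.mem_union, Set.mem_insert_iff, Set.mem_singleton_iff]
    tauto
  have hs : encState E qt 0 m2
      = (Set.range E.σI ∪ {E.σ1 0, E.σ2 m2}) ∪ {E.σQ qt} := by
    ext b
    simp only [encState, Set.mem_union, Set.mem_insert_iff, Set.mem_singleton_iff]
    tauto
  rw [hc, hs]
  refine enc_trans_single E Ax _ _ _ _ h2 (Or.inr (Or.inl rfl)) ?_
  rintro (⟨y, hy⟩ | h | h)
  · exact rne dIIc y x hy
  · exact rne d1Ic 0 x h.symm
  · exact rne d2Ic m2 x h.symm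

lemma enc_sim_zero2 (Ax : Set α) (x : M.I) (m1 : ℕ) (qt : Q)
    (h2 : (E.σ2 0, some (E.σIc x), E.σQ qt) ∈ E.toAPA.Rp) :
    Relation.ReflTransGen (E.toAPA.Trans Ax)
      (encState E x.val.1 m1 0) (encState E qt m1 0) := by
  obtain ⟨d12, d1Q, d1I, d1Ic, d2Q, d2I, d2Ic, dQI, dQIc, dIIc⟩ := enc_disj E
  refine Relation.ReflTransGen.head (enc_trans_toC E Ax x m1 0)
    (Relation.ReflTransGen.single ?_)
  have hc : encStateC E x m1 0
      = (Set.range E.σI ∪ {E.σ1 m1, E.σ2 0}) ∪ {E.σIc x} := by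
    ext b
    simp only [encStateC, Set.mem_union, Set.mem_insert_iff, Set.mem_singleton_iff]
    tauto
  have hs : encState E qt m1 0
      = (Set.range E.σI ∪ {E.σ1 m1, E.σ2 0}) ∪ {E.σQ qt} := by
    ext b
    simp only [encState, Set.mem_union, Set.mem_insert_iff, Set.mem_singleton_iff]
    tauto
  rw [hc, hs]
  refine enc_trans_single E Ax _ _ _ _ h2 (Or.inr (Or.inr rfl)) ?_
  rintro (⟨y, hy⟩ | h | h)
  · exact rne dIIc y x hy
  · exact rne d1Ic m1 x h.symm
  · exact rne d2Ic 0 x h.symm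

end Aux

/-- if `⇒^k((q, m1, m2)) = (q', m1', m2')` then there is a finite
sequence of APA transitions (w.r.t. an arbitrary reference set `Ax`) from
`F(A^I ∪ {σQ q, σ1 m1, σ2 m2})` to `F(A^I ∪ {σQ q', σ1 m1', σ2 m2'})`:
the APA encoding simulates `M`. -/
theorem apa_encoding_simulates_minsky {Q α : Type*} [Finite Q]
    (M : Minsky Q) (E : Encoding M α) (q q' : Q) (m1 m2 m1' m2' k : ℕ)
    (h : M.StepN k (q, m1, m2) (q', m1', m2')) (Ax : Set α) :
    Relation.ReflTransGen (E.toAPA.Trans Ax)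
      (encState E q m1 m2) (encState E q' m1' m2') := by
  induction k generalizing q m1 m2 with
  | zero =>
    have h' : ((q, m1, m2) : Q × ℕ × ℕ) = (q', m1', m2') := h
    injection h' with h1 h'
    injection h' with h2 h3
    subst h1; subst h2; subst h3
    exact Relation.ReflTransGen.refl
  | succ k ih =>
    obtain ⟨c'', hstep, hrest⟩ := h
    cases hstep with
    | @inc1 _ q2 _ _ hx =>
      refine Relation.ReflTransGen.trans
        (enc_sim_count1 E Ax ⟨(q, 1, q2, none), hx⟩ m1 (m1 + 1) m2 q2 ?_ ?_)
        (ih q2 (m1 + 1) m2 hrest)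
      · rw [E.Rp_spec]
        exact Or.inr (Or.inl ⟨⟨(q, 1, q2, none), hx⟩, m1, rfl, by simp [sigC]⟩)
      · rw [E.Rp_spec]
        exact Or.inr (Or.inr (Or.inr (Or.inl
          ⟨⟨(q, 1, q2, none), hx⟩, m1, rfl, by simp [sigC]⟩)))
    | @inc2 _ q2 _ _ hx =>
      refine Relation.ReflTransGen.trans
        (enc_sim_count2 E Ax ⟨(q, 2, q2, none), hx⟩ m1 m2 (m2 + 1) q2 ?_ ?_)
        (ih q2 m1 (m2 + 1) hrest)
      · rw [E.Rp_spec]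
        exact Or.inr (Or.inl ⟨⟨(q, 2, q2, none), hx⟩, m2, rfl, by simp [sigC]⟩)
      · rw [E.Rp_spec]
        exact Or.inr (Or.inr (Or.inr (Or.inl
          ⟨⟨(q, 2, q2, none), hx⟩, m2, rfl, by simp [sigC]⟩)))
    | @dec1 _ q2 q3 _ _ hx hm =>
      refine Relation.ReflTransGen.trans
        (enc_sim_count1 E Ax ⟨(q, 1, q2, some q3), hx⟩ m1 (m1 - 1) m2 q3 ?_ ?_)
        (ih q3 (m1 - 1) m2 hrest)
      · rw [E.Rp_spec]
        exact Or.inr (Or.inr (Or.inl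
          ⟨⟨(q, 1, q2, some q3), hx⟩, m1, hm, ⟨q3, rfl⟩, by simp [sigC]⟩))
      · rw [E.Rp_spec]
        exact Or.inr (Or.inr (Or.inr (Or.inr (Or.inl
          ⟨⟨(q, 1, q2, some q3), hx⟩, m1, hm, q3, rfl, by simp [sigC]⟩))))
    | @dec2 _ q2 q3 _ _ hx hm =>
      refine Relation.ReflTransGen.trans
        (enc_sim_count2 E Ax ⟨(q, 2, q2, some q3), hx⟩ m1 m2 (m2 - 1) q3 ?_ ?_)
        (ih q3 m1 (m2 - 1) hrest)
      · rw [E.Rp_spec]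
        exact Or.inr (Or.inr (Or.inl
          ⟨⟨(q, 2, q2, some q3), hx⟩, m2, hm, ⟨q3, rfl⟩, by simp [sigC]⟩))
      · rw [E.Rp_spec]
        exact Or.inr (Or.inr (Or.inr (Or.inr (Or.inl
          ⟨⟨(q, 2, q2, some q3), hx⟩, m2, hm, q3, rfl, by simp [sigC]⟩))))
    | @zero1 _ q2 q3 _ hx =>
      refine Relation.ReflTransGen.trans
        (enc_sim_zero1 E Ax ⟨(q, 1, q2, some q3), hx⟩ m2 q2 ?_)
        (ih q2 0 m2 hrest)
      rw [E.Rp_spec]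
      exact Or.inr (Or.inr (Or.inr (Or.inr (Or.inr
        ⟨⟨(q, 1, q2, some q3), hx⟩, q3, rfl, by simp [sigC]⟩))))
    | @zero2 _ q2 q3 _ hx =>
      refine Relation.ReflTransGen.trans
        (enc_sim_zero2 E Ax ⟨(q, 2, q2, some q3), hx⟩ m1 q2 ?_)
        (ih q2 m1 0 hrest)
      rw [E.Rp_spec]
      exact Or.inr (Or.inr (Or.inr (Or.inr (Or.inr
        ⟨⟨(q, 2, q2, some q3), hx⟩, q3, rfl, by simp [sigC]⟩))))
end

section
/- Let M = (Q, n1, n2, ⇒, q0, qf, I) be a two-counter Minsky machine and let (A, R, Rp, A0, ↪) be its APA encoding. For all m1, m2 ∈ ℕ, there is no reference set Ax ⊆ A and no set A2 ⊆ A such that F(A^I ∪ {σQ(qf), σ1(m1), σ2(m2)}) ↪^{Ax} F(A2); i.e., the APA state corresponding to the halting state qf has no outgoing transitions. -/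
section Helpers

variable {Q α : Type*} {M : Minsky Q} (E : Encoding M α)

lemma sigIc_not_mem_encState (x : M.I) (q : Q) (m1 m2 : ℕ) :
    E.σIc x ∉ encState E q m1 m2 := by
  obtain ⟨-, -, -, h1c, -, -, h2c, -, hQc, hIc⟩ := enc_disj E
  intro h
  rcases h with h | h
  · exact Set.disjoint_right.1 hIc ⟨x, rfl⟩ h
  · rcases h with h | h | h
    · exact Set.disjoint_right.1 hQc ⟨x, rfl⟩ ⟨q, h.symm⟩
    · exact Set.disjoint_right.1 h1c ⟨x, rfl⟩ ⟨m1, h.symm⟩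
    · exact Set.disjoint_right.1 h2c ⟨x, rfl⟩ ⟨m2, h.symm⟩

lemma sigQ_mem_encState {q' q : Q} {m1 m2 : ℕ}
    (h : E.σQ q' ∈ encState E q m1 m2) : q' = q := by
  obtain ⟨-, h1Q, -, -, h2Q, -, -, hQI, -, -⟩ := enc_disj E
  rcases h with h | h
  · exact absurd h (Set.disjoint_left.1 hQI ⟨q', rfl⟩)
  · rcases h with h | h | h
    · exact E.injQ h
    · exact (Set.disjoint_left.1 h1Q ⟨m1, h.symm⟩ ⟨q', rfl⟩).elim
    · exact (Set.disjoint_left.1 h2Q ⟨m2, h.symm⟩ ⟨q', rfl⟩).elim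

end Helpers

/-- the APA state corresponding to the halting state `qf`
has no outgoing transitions, whatever the reference set. -/
theorem halting_state_has_no_outgoing_transition {Q α : Type*} [Finite Q]
    (M : Minsky Q) (E : Encoding M α) (m1 m2 : ℕ) (Ax A2 : Set α) :
    ¬ E.toAPA.Trans Ax (encState E M.qf m1 m2) A2 := by
  rintro ⟨Γ, ⟨t, ht⟩, hsub, -⟩
  obtain ⟨hRp, hsrc, hmid, -⟩ := hsub ht
  rw [E.Rp_spec] at hRp
  rcases hRp with ⟨x, rfl⟩ | ⟨x, n, -, rfl⟩ | ⟨x, n, -, -, rfl⟩ |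
      ⟨x, n, -, rfl⟩ | ⟨x, n, -, q3, -, rfl⟩ | ⟨x, q3, -, rfl⟩
  · exact M.I_src x.val x.property (sigQ_mem_encState E (hmid _ rfl))
  · exact sigIc_not_mem_encState E x M.qf m1 m2 hsrc
  · exact sigIc_not_mem_encState E x M.qf m1 m2 hsrc
  · exact sigIc_not_mem_encState E x M.qf m1 m2 (hmid _ rfl)
  · exact sigIc_not_mem_encState E x M.qf m1 m2 (hmid _ rfl)
  · exact sigIc_not_mem_encState E x M.qf m1 m2 (hmid _ rfl)
end

section
/- Let M be a two-counter Minsky machine with instruction set I and let (A, R, Rp, A0, ↪) be its APA encoding. If x = (q1, 1, q2, ε) ∈ I, then for all m1, m2 ∈ ℕ and every reference set Ax ⊆ A there exist two consecutive APA transitions F(A^I ∪ {σQ(q1), σ1(m1), σ2(m2)}) ↪^{Ax} F(A^I ∪ {σIc(x), σ1(m1), σ2(m2)}) ↪^{Ax} F(A^I ∪ {σQ(q2), σ1(m1+1), σ2(m2)}), simulating the increment of the first counter. -/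
private lemma ne_of_range_disjoint {α β γ : Type*} {f : β → α} {g : γ → α}
    (h : Disjoint (Set.range f) (Set.range g)) (b : β) (c : γ) : f b ≠ g c := fun e =>
  Set.disjoint_left.mp h ⟨b, rfl⟩ ⟨c, e.symm⟩

private lemma Encoding.no_attacks {Q α : Type*} {M : Minsky Q} (E : Encoding M α)
    (A1 : Set α) (b a : α) : ¬ E.toAPA.Attacks A1 b a := by
  rintro ⟨-, -, h⟩
  rw [E.R_empty] at h
  exact h

private lemma Encoding.ranges_disj {Q α : Type*} {M : Minsky Q} (E : Encoding M α) :
    Disjoint (Set.range E.σ1) (Set.range E.σ2) ∧ Disjoint (Set.range E.σ1) (Set.range E.σQ) ∧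
    Disjoint (Set.range E.σ1) (Set.range E.σI) ∧ Disjoint (Set.range E.σ1) (Set.range E.σIc) ∧
    Disjoint (Set.range E.σ2) (Set.range E.σQ) ∧ Disjoint (Set.range E.σ2) (Set.range E.σI) ∧
    Disjoint (Set.range E.σ2) (Set.range E.σIc) ∧ Disjoint (Set.range E.σQ) (Set.range E.σI) ∧
    Disjoint (Set.range E.σQ) (Set.range E.σIc) ∧ Disjoint (Set.range E.σI) (Set.range E.σIc) := by
  have h := E.disjoint_ranges
  simp only [List.pairwise_cons, List.mem_cons, List.mem_singleton, List.not_mem_nil,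
    forall_eq_or_imp, forall_eq, IsEmpty.forall_iff, implies_true, and_true,
    List.Pairwise.nil] at h
  tauto

/-- simulation of the increment instruction `(q1, 1, q2, ε)`
of the first counter by two consecutive APA transitions. -/
theorem increment_first_counter_simulated {Q α : Type*} [Finite Q]
    (M : Minsky Q) (E : Encoding M α) (q1 q2 : Q)
    (hx : (q1, 1, q2, (none : Option Q)) ∈ M.I) (m1 m2 : ℕ) (Ax : Set α) :
    E.toAPA.Trans Ax (encState E q1 m1 m2)
      (encStateC E ⟨(q1, 1, q2, none), hx⟩ m1 m2) ∧
    E.toAPA.Trans Ax (encStateC E ⟨(q1, 1, q2, none), hx⟩ m1 m2)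
      (encState E q2 (m1 + 1) m2) := by
  classical
  obtain ⟨d12, d1Q, d1I, d1Ic, d2Q, d2I, d2Ic, dQI, dQIc, dIIc⟩ := E.ranges_disj
  set x : M.I := ⟨(q1, 1, q2, none), hx⟩ with hxdef
  have n1Q : ∀ n q, E.σ1 n ≠ E.σQ q := fun n q => ne_of_range_disjoint d1Q n q
  have n2Q : ∀ n q, E.σ2 n ≠ E.σQ q := fun n q => ne_of_range_disjoint d2Q n q
  have nIQ : ∀ y q, E.σI y ≠ E.σQ q := fun y q =>
    (ne_of_range_disjoint dQI q y).symm
  have nI1 : ∀ y n, E.σI y ≠ E.σ1 n := fun y n =>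
    (ne_of_range_disjoint d1I n y).symm
  have nIIc : ∀ y z, E.σI y ≠ E.σIc z := fun y z => ne_of_range_disjoint dIIc y z
  have n2Ic : ∀ n z, E.σ2 n ≠ E.σIc z := fun n z => ne_of_range_disjoint d2Ic n z
  have n21 : ∀ n m, E.σ2 n ≠ E.σ1 m := fun n m =>
    (ne_of_range_disjoint d12 m n).symm
  have hA1I : ∀ y : M.I, E.σI y ∈ encState E q1 m1 m2 := fun y => Or.inl ⟨y, rfl⟩
  have hA1Q : E.σQ q1 ∈ encState E q1 m1 m2 := Or.inr (Or.inl rfl)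
  have hCI : ∀ y : M.I, E.σI y ∈ encStateC E x m1 m2 := fun y => Or.inl ⟨y, rfl⟩
  have hCc : E.σIc x ∈ encStateC E x m1 m2 := Or.inr (Or.inl rfl)
  have hC1 : E.σ1 m1 ∈ encStateC E x m1 m2 := Or.inr (Or.inr (Or.inl rfl))
  constructor
  · -- first transition, Γ = {(σI x, some (σQ q1), σIc x)}
    refine ⟨{(E.σI x, some (E.σQ q1), E.σIc x)}, Set.singleton_nonempty _, ?_, ?_⟩
    · intro t ht
      rw [Set.mem_singleton_iff] at ht
      subst ht
      refine ⟨?_, hA1I x, ?_, fun b _ => E.no_attacks _ _ _⟩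
      · rw [E.Rp_spec]
        exact Or.inl ⟨x, rfl⟩
      · intro a ha
        obtain rfl : E.σQ q1 = a := Option.some.inj ha
        exact hA1Q
    · have hneg : APA.neg (encState E q1 m1 m2)
          {(E.σI x, some (E.σQ q1), E.σIc x)} = {E.σQ q1} := by
        ext a
        simp only [APA.neg, Set.mem_setOf_eq, Set.mem_singleton_iff, Prod.mk.injEq,
          Option.some.injEq]
        constructor
        · rintro ⟨-, a1, -, a2, -, h, -⟩
          exact h
        · rintro rfl
          exact ⟨hA1Q, E.σI x, hA1I x, E.σIc x, rfl, rfl, rfl⟩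
      have hpos : APA.pos (encState E q1 m1 m2)
          {(E.σI x, some (E.σQ q1), E.σIc x)} = {E.σIc x} := by
        ext a
        simp only [APA.pos, Set.mem_setOf_eq, Set.mem_singleton_iff, Prod.mk.injEq]
        constructor
        · rintro ⟨a1, -, m, -, -, -, h⟩
          exact h
        · rintro rfl
          refine ⟨E.σI x, hA1I x, some (E.σQ q1), ?_, rfl, rfl, rfl⟩
          intro a ha
          obtain rfl : E.σQ q1 = a := Option.some.inj ha
          exact hA1Q
      rw [hneg, hpos]
      ext a
      simp only [encStateC, encState, Set.mem_union, Set.mem_insert_iff,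
        Set.mem_singleton_iff, Set.mem_diff]
      constructor
      · rintro (⟨y, rfl⟩ | rfl | rfl | rfl)
        · exact Or.inl ⟨Or.inl ⟨y, rfl⟩, nIQ y q1⟩
        · exact Or.inr rfl
        · exact Or.inl ⟨Or.inr (Or.inr (Or.inl rfl)), n1Q m1 q1⟩
        · exact Or.inl ⟨Or.inr (Or.inr (Or.inr rfl)), n2Q m2 q1⟩
      · rintro (⟨(hy | rfl | rfl | rfl), hne⟩ | rfl)
        · exact Or.inl hy
        · exact absurd rfl hne
        · exact Or.inr (Or.inr (Or.inl rfl))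
        · exact Or.inr (Or.inr (Or.inr rfl))
        · exact Or.inr (Or.inl rfl)
  · -- second transition
    refine ⟨{(E.σIc x, some (E.σ1 m1), E.σ1 (m1 + 1)),
             (E.σ1 m1, some (E.σIc x), E.σQ q2)}, Set.insert_nonempty _ _, ?_, ?_⟩
    · intro t ht
      simp only [Set.mem_insert_iff, Set.mem_singleton_iff] at ht
      rcases ht with rfl | rfl
      · refine ⟨?_, hCc, ?_, fun b _ => E.no_attacks _ _ _⟩
        · rw [E.Rp_spec]
          refine Or.inr (Or.inl ⟨x, m1, rfl, ?_⟩)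
          simp [sigC, hxdef]
        · intro a ha
          obtain rfl : E.σ1 m1 = a := Option.some.inj ha
          exact hC1
      · refine ⟨?_, hC1, ?_, fun b _ => E.no_attacks _ _ _⟩
        · rw [E.Rp_spec]
          refine Or.inr (Or.inr (Or.inr (Or.inl ⟨x, m1, rfl, ?_⟩)))
          simp [sigC, hxdef]
        · intro a ha
          obtain rfl : E.σIc x = a := Option.some.inj ha
          exact hCc
    · have hneg : APA.neg (encStateC E x m1 m2)
          {(E.σIc x, some (E.σ1 m1), E.σ1 (m1 + 1)),
           (E.σ1 m1, some (E.σIc x), E.σQ q2)} = {E.σ1 m1, E.σIc x} := by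
        ext a
        simp only [APA.neg, Set.mem_setOf_eq, Set.mem_insert_iff, Set.mem_singleton_iff,
          Prod.mk.injEq, Option.some.injEq]
        constructor
        · rintro ⟨-, a1, -, a2, (⟨-, h, -⟩ | ⟨-, h, -⟩)⟩
          · exact Or.inl h
          · exact Or.inr h
        · rintro (rfl | rfl)
          · exact ⟨hC1, E.σIc x, hCc, E.σ1 (m1 + 1), Or.inl ⟨rfl, rfl, rfl⟩⟩
          · exact ⟨hCc, E.σ1 m1, hC1, E.σQ q2, Or.inr ⟨rfl, rfl, rfl⟩⟩
      have hpos : APA.pos (encStateC E x m1 m2)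
          {(E.σIc x, some (E.σ1 m1), E.σ1 (m1 + 1)),
           (E.σ1 m1, some (E.σIc x), E.σQ q2)} = {E.σ1 (m1 + 1), E.σQ q2} := by
        ext a
        simp only [APA.pos, Set.mem_setOf_eq, Set.mem_insert_iff, Set.mem_singleton_iff,
          Prod.mk.injEq]
        constructor
        · rintro ⟨a1, -, m, -, (⟨-, -, h⟩ | ⟨-, -, h⟩)⟩
          · exact Or.inl h
          · exact Or.inr h
        · rintro (rfl | rfl)
          · refine ⟨E.σIc x, hCc, some (E.σ1 m1), ?_, Or.inl ⟨rfl, rfl, rfl⟩⟩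
            intro a ha
            obtain rfl : E.σ1 m1 = a := Option.some.inj ha
            exact hC1
          · refine ⟨E.σ1 m1, hC1, some (E.σIc x), ?_, Or.inr ⟨rfl, rfl, rfl⟩⟩
            intro a ha
            obtain rfl : E.σIc x = a := Option.some.inj ha
            exact hCc
      rw [hneg, hpos]
      ext a
      simp only [encStateC, encState, Set.mem_union, Set.mem_insert_iff,
        Set.mem_singleton_iff, Set.mem_diff, not_or]
      constructor
      · rintro (⟨y, rfl⟩ | rfl | rfl | rfl)
        · exact Or.inl ⟨Or.inl ⟨y, rfl⟩, nI1 y m1, nIIc y x⟩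
        · exact Or.inr (Or.inr rfl)
        · exact Or.inr (Or.inl rfl)
        · exact Or.inl ⟨Or.inr (Or.inr (Or.inr rfl)), n21 m2 m1, n2Ic m2 x⟩
      · rintro (⟨(hy | rfl | rfl | rfl), hne1, hne2⟩ | rfl | rfl)
        · exact Or.inl hy
        · exact absurd rfl hne2
        · exact absurd rfl hne1
        · exact Or.inr (Or.inr (Or.inr rfl))
        · exact Or.inr (Or.inr (Or.inl rfl))
        · exact Or.inr (Or.inl rfl)
end

section
/- Let M be a two-counter Minsky machine with instruction set I and let (A, R, Rp, A0, ↪) be its APA encoding. If x = (q1, 1, q2, q3) ∈ I, then for all m1 ≥ 1, all m2 ∈ ℕ, and every reference set Ax ⊆ A there exist two consecutive APA transitions F(A^I ∪ {σQ(q1), σ1(m1), σ2(m2)}) ↪^{Ax} F(A^I ∪ {σIc(x), σ1(m1), σ2(m2)}) ↪^{Ax} F(A^I ∪ {σQ(q3), σ1(m1−1), σ2(m2)}), simulating the decrement of the first counter. -/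
/-- simulation of the decrement instruction `(q1, 1, q2, q3)`
on the first counter (when `m1 ≥ 1`) by two consecutive APA transitions. -/
theorem decrement_first_counter_simulated {Q α : Type*} [Finite Q]
    (M : Minsky Q) (E : Encoding M α) (q1 q2 q3 : Q)
    (hx : (q1, 1, q2, some q3) ∈ M.I) (m1 : ℕ) (hm1 : 1 ≤ m1) (m2 : ℕ)
    (Ax : Set α) :
    E.toAPA.Trans Ax (encState E q1 m1 m2)
      (encStateC E ⟨(q1, 1, q2, some q3), hx⟩ m1 m2) ∧
    E.toAPA.Trans Ax (encStateC E ⟨(q1, 1, q2, some q3), hx⟩ m1 m2)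
      (encState E q3 (m1 - 1) m2) := by
  classical
  set x : M.I := ⟨(q1, 1, q2, some q3), hx⟩ with hxdef
  have hd := E.disjoint_ranges
  simp only [List.pairwise_cons, List.mem_cons, List.not_mem_nil, List.mem_singleton,
    forall_eq_or_imp, forall_eq, List.Pairwise.nil, IsEmpty.forall_iff, and_true] at hd
  obtain ⟨⟨h12, h1Q, h1I, h1Ic, -⟩, ⟨h2Q, h2I, h2Ic, -⟩, ⟨hQI, hQIc, -⟩, ⟨hIIc, -⟩, -⟩ := hd
  have ne12 : ∀ a b, E.σ1 a ≠ E.σ2 b := fun a b h =>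
    Set.disjoint_left.mp h12 ⟨a, rfl⟩ ⟨b, h.symm⟩
  have ne1Q : ∀ a q, E.σ1 a ≠ E.σQ q := fun a q h =>
    Set.disjoint_left.mp h1Q ⟨a, rfl⟩ ⟨q, h.symm⟩
  have ne1I : ∀ a y, E.σ1 a ≠ E.σI y := fun a y h =>
    Set.disjoint_left.mp h1I ⟨a, rfl⟩ ⟨y, h.symm⟩
  have ne1Ic : ∀ a y, E.σ1 a ≠ E.σIc y := fun a y h =>
    Set.disjoint_left.mp h1Ic ⟨a, rfl⟩ ⟨y, h.symm⟩
  have ne2Q : ∀ a q, E.σ2 a ≠ E.σQ q := fun a q h =>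
    Set.disjoint_left.mp h2Q ⟨a, rfl⟩ ⟨q, h.symm⟩
  have ne2I : ∀ a y, E.σ2 a ≠ E.σI y := fun a y h =>
    Set.disjoint_left.mp h2I ⟨a, rfl⟩ ⟨y, h.symm⟩
  have ne2Ic : ∀ a y, E.σ2 a ≠ E.σIc y := fun a y h =>
    Set.disjoint_left.mp h2Ic ⟨a, rfl⟩ ⟨y, h.symm⟩
  have neQI : ∀ q y, E.σQ q ≠ E.σI y := fun q y h =>
    Set.disjoint_left.mp hQI ⟨q, rfl⟩ ⟨y, h.symm⟩
  have neQIc : ∀ q y, E.σQ q ≠ E.σIc y := fun q y h =>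
    Set.disjoint_left.mp hQIc ⟨q, rfl⟩ ⟨y, h.symm⟩
  have neIIc : ∀ y z, E.σI y ≠ E.σIc z := fun y z h =>
    Set.disjoint_left.mp hIIc ⟨y, rfl⟩ ⟨z, h.symm⟩
  have noatk : ∀ (A1 : Set α) (b t : α), ¬ E.toAPA.Attacks A1 b t := by
    rintro A1 b t ⟨-, -, hR⟩
    rw [E.R_empty] at hR
    exact hR
  constructor
  · -- first transition
    refine ⟨{(E.σI x, some (E.σQ q1), E.σIc x)}, ⟨_, rfl⟩, ?_, ?_⟩
    · rintro t ht
      rw [Set.mem_singleton_iff] at ht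
      subst ht
      refine ⟨?_, ?_, ?_, fun b _ => noatk _ _ _⟩
      · rw [E.Rp_spec]
        exact Or.inl ⟨x, rfl⟩
      · exact Or.inl ⟨x, rfl⟩
      · rintro a ha
        injection ha with ha
        subst ha
        exact Or.inr (Or.inl rfl)
    · have hneg : APA.neg (encState E q1 m1 m2) {(E.σI x, some (E.σQ q1), E.σIc x)}
          = {E.σQ q1} := by
        ext a
        constructor
        · rintro ⟨-, a1, -, a2, hmem⟩
          simp only [Set.mem_singleton_iff, Prod.mk.injEq, Option.some.injEq] at hmem
          exact hmem.2.1
        · rintro rfl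
          exact ⟨Or.inr (Or.inl rfl), E.σI x, Or.inl ⟨x, rfl⟩, E.σIc x, rfl⟩
      have hpos : APA.pos (encState E q1 m1 m2) {(E.σI x, some (E.σQ q1), E.σIc x)}
          = {E.σIc x} := by
        ext a
        constructor
        · rintro ⟨a1, -, m, -, hmem⟩
          simp only [Set.mem_singleton_iff, Prod.mk.injEq] at hmem
          exact hmem.2.2
        · rintro rfl
          refine ⟨E.σI x, Or.inl ⟨x, rfl⟩, some (E.σQ q1), ?_, rfl⟩
          rintro a ha
          injection ha with ha
          subst ha
          exact Or.inr (Or.inl rfl)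
      rw [hneg, hpos]
      ext a
      simp only [encState, encStateC, Set.mem_union, Set.mem_diff, Set.mem_singleton_iff,
        Set.mem_insert_iff, Set.mem_range]
      constructor
      · rintro (⟨y, rfl⟩ | rfl | rfl | rfl)
        · exact Or.inl ⟨Or.inl ⟨y, rfl⟩, fun h => neQI q1 y h.symm⟩
        · exact Or.inr rfl
        · exact Or.inl ⟨Or.inr (Or.inr (Or.inl rfl)), ne1Q m1 q1⟩
        · exact Or.inl ⟨Or.inr (Or.inr (Or.inr rfl)), ne2Q m2 q1⟩
      · rintro (⟨(⟨y, rfl⟩ | rfl | rfl | rfl), hne⟩ | rfl)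
        · exact Or.inl ⟨y, rfl⟩
        · exact absurd rfl hne
        · exact Or.inr (Or.inr (Or.inl rfl))
        · exact Or.inr (Or.inr (Or.inr rfl))
        · exact Or.inr (Or.inl rfl)
  · -- second transition
    refine ⟨{(E.σIc x, some (E.σ1 m1), E.σ1 (m1 - 1)),
             (E.σ1 m1, some (E.σIc x), E.σQ q3)}, ⟨_, Or.inl rfl⟩, ?_, ?_⟩
    · rintro t (rfl | rfl)
      · refine ⟨?_, Or.inr (Or.inl rfl), ?_, fun b _ => noatk _ _ _⟩
        · rw [E.Rp_spec]
          refine Or.inr (Or.inr (Or.inl ⟨x, m1, hm1, ⟨q3, rfl⟩, ?_⟩))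
          simp [sigC, hxdef]
        · rintro a ha
          injection ha with ha
          subst ha
          exact Or.inr (Or.inr (Or.inl rfl))
      · refine ⟨?_, Or.inr (Or.inr (Or.inl rfl)), ?_, fun b _ => noatk _ _ _⟩
        · rw [E.Rp_spec]
          refine Or.inr (Or.inr (Or.inr (Or.inr (Or.inl ⟨x, m1, hm1, q3, rfl, ?_⟩))))
          simp [sigC, hxdef]
        · rintro a ha
          injection ha with ha
          subst ha
          exact Or.inr (Or.inl rfl)
    · have hneg : APA.neg (encStateC E x m1 m2)
          {(E.σIc x, some (E.σ1 m1), E.σ1 (m1 - 1)), (E.σ1 m1, some (E.σIc x), E.σQ q3)}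
          = {E.σ1 m1, E.σIc x} := by
        ext a
        constructor
        · rintro ⟨-, a1, -, a2, hmem⟩
          simp only [Set.mem_insert_iff, Set.mem_singleton_iff, Prod.mk.injEq,
            Option.some.injEq] at hmem ⊢
          rcases hmem with ⟨-, h2, -⟩ | ⟨-, h2, -⟩
          · exact Or.inl h2
          · exact Or.inr h2
        · rintro (rfl | rfl)
          · exact ⟨Or.inr (Or.inr (Or.inl rfl)), E.σIc x, Or.inr (Or.inl rfl),
              E.σ1 (m1 - 1), Or.inl rfl⟩
          · exact ⟨Or.inr (Or.inl rfl), E.σ1 m1, Or.inr (Or.inr (Or.inl rfl)),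
              E.σQ q3, Or.inr rfl⟩
      have hpos : APA.pos (encStateC E x m1 m2)
          {(E.σIc x, some (E.σ1 m1), E.σ1 (m1 - 1)), (E.σ1 m1, some (E.σIc x), E.σQ q3)}
          = {E.σ1 (m1 - 1), E.σQ q3} := by
        ext a
        constructor
        · rintro ⟨a1, -, m, -, hmem⟩
          simp only [Set.mem_insert_iff, Set.mem_singleton_iff, Prod.mk.injEq] at hmem ⊢
          rcases hmem with ⟨-, -, h2⟩ | ⟨-, -, h2⟩
          · exact Or.inl h2
          · exact Or.inr h2
        · rintro (rfl | rfl)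
          · refine ⟨E.σIc x, Or.inr (Or.inl rfl), some (E.σ1 m1), ?_, Or.inl rfl⟩
            rintro a ha
            injection ha with ha
            subst ha
            exact Or.inr (Or.inr (Or.inl rfl))
          · refine ⟨E.σ1 m1, Or.inr (Or.inr (Or.inl rfl)), some (E.σIc x), ?_, Or.inr rfl⟩
            rintro a ha
            injection ha with ha
            subst ha
            exact Or.inr (Or.inl rfl)
      rw [hneg, hpos]
      ext a
      simp only [encState, encStateC, Set.mem_union, Set.mem_diff, Set.mem_singleton_iff,
        Set.mem_insert_iff, Set.mem_range]
      constructor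
      · rintro (⟨y, rfl⟩ | rfl | rfl | rfl)
        · refine Or.inl ⟨Or.inl ⟨y, rfl⟩, ?_⟩
          rintro (h | h)
          · exact ne1I m1 y h.symm
          · exact neIIc y x h
        · exact Or.inr (Or.inr rfl)
        · exact Or.inr (Or.inl rfl)
        · refine Or.inl ⟨Or.inr (Or.inr (Or.inr rfl)), ?_⟩
          rintro (h | h)
          · exact ne12 m1 m2 h.symm
          · exact ne2Ic m2 x h
      · rintro (⟨(⟨y, rfl⟩ | rfl | rfl | rfl), hne⟩ | rfl | rfl)
        · exact Or.inl ⟨y, rfl⟩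
        · exact absurd (Or.inr rfl) hne
        · exact absurd (Or.inl rfl) hne
        · exact Or.inr (Or.inr (Or.inr rfl))
        · exact Or.inr (Or.inr (Or.inl rfl))
        · exact Or.inr (Or.inl rfl)
end

section
/- Let M be a two-counter Minsky machine with instruction set I and let (A, R, Rp, A0, ↪) be its APA encoding. If x = (q1, 1, q2, q3) ∈ I, then for all m2 ∈ ℕ and every reference set Ax ⊆ A there exist two consecutive APA transitions F(A^I ∪ {σQ(q1), σ1(0), σ2(m2)}) ↪^{Ax} F(A^I ∪ {σIc(x), σ1(0), σ2(m2)}) ↪^{Ax} F(A^I ∪ {σQ(q2), σ1(0), σ2(m2)}), simulating the zero test of the first counter. -/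
/-- simulation of the zero test of the first counter for the
instruction `(q1, 1, q2, q3)` by two consecutive APA transitions. -/
theorem zero_test_first_counter_simulated {Q α : Type*} [Finite Q]
    (M : Minsky Q) (E : Encoding M α) (q1 q2 q3 : Q)
    (hx : (q1, 1, q2, some q3) ∈ M.I) (m2 : ℕ) (Ax : Set α) :
    E.toAPA.Trans Ax (encState E q1 0 m2)
      (encStateC E ⟨(q1, 1, q2, some q3), hx⟩ 0 m2) ∧
    E.toAPA.Trans Ax (encStateC E ⟨(q1, 1, q2, some q3), hx⟩ 0 m2)
      (encState E q2 0 m2) := by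
  classical
  set x : M.I := ⟨(q1, 1, q2, some q3), hx⟩ with hxdef
  -- disjointness facts
  have hd := E.disjoint_ranges
  simp only [List.pairwise_cons, List.mem_cons, List.not_mem_nil, or_false,
    List.mem_singleton, forall_eq_or_imp, forall_eq] at hd
  obtain ⟨⟨d12, d1Q, d1I, d1Ic⟩, ⟨d2Q, d2I, d2Ic⟩, ⟨dQI, dQIc⟩, dIIc, -⟩ := hd
  have hQI : ∀ (q : Q) (a : α), a ∈ Set.range E.σI → a ≠ E.σQ q := by
    intro q a ha h
    exact Set.disjoint_right.mp dQI ha (h ▸ Set.mem_range_self q)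
  have hIcI : ∀ (y : M.I) (a : α), a ∈ Set.range E.σI → a ≠ E.σIc y := by
    intro y a ha h
    exact Set.disjoint_left.mp dIIc ha (h ▸ Set.mem_range_self y)
  have h1Q : ∀ (n : ℕ) (q : Q), E.σ1 n ≠ E.σQ q := by
    intro n q h
    exact Set.disjoint_left.mp d1Q (Set.mem_range_self n) (h ▸ Set.mem_range_self q)
  have h2Q : ∀ (n : ℕ) (q : Q), E.σ2 n ≠ E.σQ q := by
    intro n q h
    exact Set.disjoint_left.mp d2Q (Set.mem_range_self n) (h ▸ Set.mem_range_self q)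
  have h1Ic : ∀ (n : ℕ) (y : M.I), E.σ1 n ≠ E.σIc y := by
    intro n y h
    exact Set.disjoint_left.mp d1Ic (Set.mem_range_self n) (h ▸ Set.mem_range_self y)
  have h2Ic : ∀ (n : ℕ) (y : M.I), E.σ2 n ≠ E.σIc y := by
    intro n y h
    exact Set.disjoint_left.mp d2Ic (Set.mem_range_self n) (h ▸ Set.mem_range_self y)
  have hnoatt : ∀ (A1 : Set α) (b c : α), ¬ E.toAPA.Attacks A1 b c := by
    intro A1 b c h
    have := h.2.2
    rw [E.R_empty] at this
    exact this
  constructor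
  · -- first transition
    refine ⟨{(E.σI x, some (E.σQ q1), E.σIc x)}, Set.singleton_nonempty _, ?_, ?_⟩
    · rintro t rfl
      refine ⟨?_, Or.inl (Set.mem_range_self x), ?_, fun b _ => hnoatt _ _ _⟩
      · rw [E.Rp_spec]
        exact Or.inl ⟨x, rfl⟩
      · rintro a ha
        cases ha
        exact Or.inr (Or.inl rfl)
    · have hneg : APA.neg (encState E q1 0 m2) {(E.σI x, some (E.σQ q1), E.σIc x)}
          = {E.σQ q1} := by
        ext a
        constructor
        · rintro ⟨-, a1, -, a2, hmem⟩
          simp only [Set.mem_singleton_iff, Prod.mk.injEq, Option.some.injEq] at hmem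
          exact hmem.2.1
        · rintro rfl
          exact ⟨Or.inr (Or.inl rfl), E.σI x, Or.inl (Set.mem_range_self x), E.σIc x, rfl⟩
      have hpos : APA.pos (encState E q1 0 m2) {(E.σI x, some (E.σQ q1), E.σIc x)}
          = {E.σIc x} := by
        ext a
        constructor
        · rintro ⟨a1, -, m, -, hmem⟩
          simp only [Set.mem_singleton_iff, Prod.mk.injEq] at hmem
          exact hmem.2.2
        · rintro rfl
          refine ⟨E.σI x, Or.inl (Set.mem_range_self x), some (E.σQ q1), ?_, rfl⟩
          rintro a ha
          cases ha
          exact Or.inr (Or.inl rfl)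
      rw [hneg, hpos]
      ext a
      simp only [encState, encStateC, Set.mem_union, Set.mem_diff,
        Set.mem_insert_iff, Set.mem_singleton_iff]
      constructor
      · rintro (h | rfl | rfl | rfl)
        · exact Or.inl ⟨Or.inl h, hQI q1 a h⟩
        · exact Or.inr rfl
        · exact Or.inl ⟨Or.inr (Or.inr (Or.inl rfl)), h1Q 0 q1⟩
        · exact Or.inl ⟨Or.inr (Or.inr (Or.inr rfl)), h2Q m2 q1⟩
      · rintro (⟨h | rfl | rfl | rfl, hne⟩ | rfl)
        · exact Or.inl h
        · exact absurd rfl hne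
        · exact Or.inr (Or.inr (Or.inl rfl))
        · exact Or.inr (Or.inr (Or.inr rfl))
        · exact Or.inr (Or.inl rfl)
  · -- second transition
    refine ⟨{(E.σ1 0, some (E.σIc x), E.σQ q2)}, Set.singleton_nonempty _, ?_, ?_⟩
    · rintro t rfl
      refine ⟨?_, Or.inr (Or.inr (Or.inl rfl)), ?_, fun b _ => hnoatt _ _ _⟩
      · rw [E.Rp_spec]
        refine Or.inr (Or.inr (Or.inr (Or.inr (Or.inr ⟨x, q3, rfl, ?_⟩))))
        rfl
      · rintro a ha
        cases ha
        exact Or.inr (Or.inl rfl)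
    · have hneg : APA.neg (encStateC E x 0 m2) {(E.σ1 0, some (E.σIc x), E.σQ q2)}
          = {E.σIc x} := by
        ext a
        constructor
        · rintro ⟨-, a1, -, a2, hmem⟩
          simp only [Set.mem_singleton_iff, Prod.mk.injEq, Option.some.injEq] at hmem
          exact hmem.2.1
        · rintro rfl
          exact ⟨Or.inr (Or.inl rfl), E.σ1 0, Or.inr (Or.inr (Or.inl rfl)), E.σQ q2, rfl⟩
      have hpos : APA.pos (encStateC E x 0 m2) {(E.σ1 0, some (E.σIc x), E.σQ q2)}
          = {E.σQ q2} := by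
        ext a
        constructor
        · rintro ⟨a1, -, m, -, hmem⟩
          simp only [Set.mem_singleton_iff, Prod.mk.injEq] at hmem
          exact hmem.2.2
        · rintro rfl
          refine ⟨E.σ1 0, Or.inr (Or.inr (Or.inl rfl)), some (E.σIc x), ?_, rfl⟩
          rintro a ha
          cases ha
          exact Or.inr (Or.inl rfl)
      rw [hneg, hpos]
      ext a
      simp only [encState, encStateC, Set.mem_union, Set.mem_diff,
        Set.mem_insert_iff, Set.mem_singleton_iff]
      constructor
      · rintro (h | rfl | rfl | rfl)
        · exact Or.inl ⟨Or.inl h, hIcI x a h⟩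
        · exact Or.inr rfl
        · exact Or.inl ⟨Or.inr (Or.inr (Or.inl rfl)), h1Ic 0 x⟩
        · exact Or.inl ⟨Or.inr (Or.inr (Or.inr rfl)), h2Ic m2 x⟩
      · rintro (⟨h | rfl | rfl | rfl, hne⟩ | rfl)
        · exact Or.inl h
        · exact absurd rfl hne
        · exact Or.inr (Or.inr (Or.inl rfl))
        · exact Or.inr (Or.inr (Or.inr rfl))
        · exact Or.inr (Or.inl rfl)
end

section
/- Let M be a two-counter Minsky machine with instruction set I and let (A, R, Rp, A0, ↪) be its APA encoding. If x = (q1, 2, q2, q3) ∈ I, then for all m1 ∈ ℕ and every reference set Ax ⊆ A there exist two consecutive APA transitions F(A^I ∪ {σQ(q1), σ1(m1), σ2(0)}) ↪^{Ax} F(A^I ∪ {σIc(x), σ1(m1), σ2(0)}) ↪^{Ax} F(A^I ∪ {σQ(q2), σ1(m1), σ2(0)}), simulating the zero test of the second counter. -/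
/-- Auxiliary: removing one element and adding another in a union with a triple. -/
lemma swap_one_aux {β : Type*} (S : Set β) (u v w1 w2 : β)
    (hu : u ∉ S) (hu1 : u ≠ w1) (hu2 : u ≠ w2) :
    ((S ∪ {u, w1, w2}) \ {u}) ∪ {v} = S ∪ {v, w1, w2} := by
  ext a
  simp only [Set.mem_union, Set.mem_diff, Set.mem_insert_iff, Set.mem_singleton_iff]
  constructor
  · rintro (⟨h | h | h | h, hne⟩ | h)
    · exact Or.inl h
    · exact absurd h hne
    · exact Or.inr (Or.inr (Or.inl h))
    · exact Or.inr (Or.inr (Or.inr h))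
    · exact Or.inr (Or.inl h)
  · rintro (h | h | h | h)
    · exact Or.inl ⟨Or.inl h, fun he => hu (he ▸ h)⟩
    · exact Or.inr h
    · exact Or.inl ⟨Or.inr (Or.inr (Or.inl h)), fun he => hu1 (he.symm.trans h)⟩
    · exact Or.inl ⟨Or.inr (Or.inr (Or.inr h)), fun he => hu2 (he.symm.trans h)⟩

lemma neg_single_aux {β : Type*} (A1 : Set β) (b w c : β) (hb : b ∈ A1) (hw : w ∈ A1) :
    APA.neg A1 {(b, some w, c)} = {w} := by
  ext a
  simp only [APA.neg, Set.mem_setOf_eq, Set.mem_singleton_iff, Prod.mk.injEq,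
    Option.some.injEq]
  constructor
  · rintro ⟨-, a1, -, a2, -, h, -⟩
    exact h
  · rintro rfl
    exact ⟨hw, b, hb, c, rfl, rfl, rfl⟩

lemma pos_single_aux {β : Type*} (A1 : Set β) (b w c : β) (hb : b ∈ A1) (hw : w ∈ A1) :
    APA.pos A1 {(b, some w, c)} = {c} := by
  ext a
  simp only [APA.pos, Set.mem_setOf_eq, Set.mem_singleton_iff, Prod.mk.injEq]
  constructor
  · rintro ⟨a1, -, m, -, -, -, h⟩
    exact h
  · rintro rfl
    exact ⟨b, hb, some w, fun a ha => (Option.some.inj ha) ▸ hw, rfl, rfl, rfl⟩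

/-- simulation of the zero test of the second counter for the
instruction `(q1, 2, q2, q3)` by two consecutive APA transitions. -/
theorem zero_test_second_counter_simulated {Q α : Type*} [Finite Q]
    (M : Minsky Q) (E : Encoding M α) (q1 q2 q3 : Q)
    (hx : (q1, 2, q2, some q3) ∈ M.I) (m1 : ℕ) (Ax : Set α) :
    E.toAPA.Trans Ax (encState E q1 m1 0)
      (encStateC E ⟨(q1, 2, q2, some q3), hx⟩ m1 0) ∧
    E.toAPA.Trans Ax (encStateC E ⟨(q1, 2, q2, some q3), hx⟩ m1 0)
      (encState E q2 m1 0) := by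
  classical
  -- no attacks ever, since R = ∅
  have hR : ∀ (A1 : Set α) (b a : α), ¬ E.toAPA.Attacks A1 b a := by
    intro A1 b a h
    have h2 := h.2.2
    rw [E.R_empty] at h2
    exact h2
  set x : M.I := ⟨(q1, 2, q2, some q3), hx⟩ with hxdef
  -- disjointness facts
  have hd := E.disjoint_ranges
  simp only [List.pairwise_cons, List.mem_cons, List.not_mem_nil, forall_eq_or_imp,
    forall_eq, or_false, List.Pairwise.nil, and_true] at hd
  obtain ⟨⟨h12, h1Q, h1I, h1C⟩, ⟨h2Q, h2I, h2C⟩, ⟨hQI, hQC⟩, hIC, -⟩ := hd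
  have ne_of : ∀ {s t : Set α}, Disjoint s t → ∀ {a b : α}, a ∈ s → b ∈ t → a ≠ b := by
    intro s t hdj a b ha hb he
    exact Set.disjoint_left.mp hdj ha (he.symm ▸ hb)
  have hQnI : ∀ q, E.σQ q ∉ Set.range E.σI := fun q hm =>
    Set.disjoint_left.mp hQI ⟨q, rfl⟩ hm
  have hQ1 : ∀ q n, E.σQ q ≠ E.σ1 n := fun q n => ne_of h1Q.symm ⟨q, rfl⟩ ⟨n, rfl⟩
  have hQ2 : ∀ q n, E.σQ q ≠ E.σ2 n := fun q n => ne_of h2Q.symm ⟨q, rfl⟩ ⟨n, rfl⟩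
  have hCnI : ∀ y : M.I, E.σIc y ∉ Set.range E.σI := fun y hm =>
    Set.disjoint_left.mp hIC hm ⟨y, rfl⟩
  have hC1 : ∀ (y : M.I) (n : ℕ), E.σIc y ≠ E.σ1 n := fun y n =>
    ne_of h1C.symm ⟨y, rfl⟩ ⟨n, rfl⟩
  have hC2 : ∀ (y : M.I) (n : ℕ), E.σIc y ≠ E.σ2 n := fun y n =>
    ne_of h2C.symm ⟨y, rfl⟩ ⟨n, rfl⟩
  -- memberships
  have hmI : E.σI x ∈ encState E q1 m1 0 := Set.mem_union_left _ ⟨x, rfl⟩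
  have hmQ : E.σQ q1 ∈ encState E q1 m1 0 := Set.mem_union_right _ (by left; rfl)
  have hmC : E.σIc x ∈ encStateC E x m1 0 := Set.mem_union_right _ (by left; rfl)
  have hm2 : E.σ2 0 ∈ encStateC E x m1 0 :=
    Set.mem_union_right _ (by right; right; rfl)
  constructor
  · -- first transition
    refine ⟨{(E.σI x, some (E.σQ q1), E.σIc x)}, Set.singleton_nonempty _, ?_, ?_⟩
    · intro t ht
      rw [Set.mem_singleton_iff] at ht
      subst ht
      refine ⟨?_, hmI, ?_, fun b _ => hR _ b _⟩
      · rw [E.Rp_spec]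
        exact Or.inl ⟨x, rfl⟩
      · intro a ha
        cases Option.some.inj ha
        exact hmQ
    · rw [neg_single_aux _ _ _ _ hmI hmQ, pos_single_aux _ _ _ _ hmI hmQ]
      show encStateC E x m1 0 = _
      rw [encState, encStateC,
        swap_one_aux _ _ _ _ _ (hQnI q1) (hQ1 q1 m1) (hQ2 q1 0)]
  · -- second transition
    refine ⟨{(E.σ2 0, some (E.σIc x), E.σQ q2)}, Set.singleton_nonempty _, ?_, ?_⟩
    · intro t ht
      rw [Set.mem_singleton_iff] at ht
      subst ht
      refine ⟨?_, hm2, ?_, fun b _ => hR _ b _⟩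
      · rw [E.Rp_spec]
        refine Or.inr (Or.inr (Or.inr (Or.inr (Or.inr ⟨x, q3, rfl, ?_⟩))))
        simp [sigC, hxdef]
      · intro a ha
        cases Option.some.inj ha
        exact hmC
    · rw [neg_single_aux _ _ _ _ hm2 hmC, pos_single_aux _ _ _ _ hm2 hmC]
      show encState E q2 m1 0 = _
      rw [encState, encStateC,
        swap_one_aux _ _ _ _ _ (hCnI x) (hC1 x m1) (hC2 x 0)]
end

section
/- Let M be a two-counter Minsky machine with instruction set I and let (A, R, Rp, A0, ↪) be its APA encoding. If x = (q1, 1, q2, ε) ∈ I, then for all m1, m2 ∈ ℕ and every reference set Ax ⊆ A there is a single APA transition F(A^I ∪ {σIc(x), σ1(m1), σ2(m2)}) ↪^{Ax} F(A^I ∪ {σQ(q2), σ1(m1+1), σ2(m2)}), obtained by executing the two conversions (σIc(x), σ1(m1), σ1(m1+1)) and (σ1(m1), σIc(x), σQ(q2)) simultaneously. -/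
/-- for the instruction `x = (q1, 1, q2, ε)`, the single APA
transition from `F(A^I ∪ {σIc x, σ1 m1, σ2 m2})` to
`F(A^I ∪ {σQ q2, σ1 (m1+1), σ2 m2})` obtained by executing the two conversions
`(σIc x, σ1 m1, σ1 (m1+1))` and `(σ1 m1, σIc x, σQ q2)` simultaneously. -/
theorem second_phase_increment_transition {Q α : Type*} [Finite Q]
    (M : Minsky Q) (E : Encoding M α) (q1 q2 : Q)
    (hx : (q1, 1, q2, (none : Option Q)) ∈ M.I) (m1 m2 : ℕ) (Ax : Set α) :
    E.toAPA.TransVia Ax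
      {(E.σIc ⟨(q1, 1, q2, none), hx⟩, some (E.σ1 m1), E.σ1 (m1 + 1)),
       (E.σ1 m1, some (E.σIc ⟨(q1, 1, q2, none), hx⟩), E.σQ q2)}
      (encStateC E ⟨(q1, 1, q2, none), hx⟩ m1 m2)
      (encState E q2 (m1 + 1) m2) := by
  classical
  set x : M.I := ⟨(q1, 1, q2, none), hx⟩ with hxdef
  set A1 : Set α := encStateC E x m1 m2 with hA1
  set Γ : Set (α × Option α × α) :=
    {(E.σIc x, some (E.σ1 m1), E.σ1 (m1 + 1)),
     (E.σ1 m1, some (E.σIc x), E.σQ q2)} with hΓ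
  -- disjointness facts
  have hd := E.disjoint_ranges
  simp only [List.pairwise_cons, List.mem_cons, List.not_mem_nil] at hd
  obtain ⟨h1, h2, h3, h4, -⟩ := hd
  have d12 : Disjoint (Set.range E.σ1) (Set.range E.σ2) := h1 _ (by simp)
  have d1I : Disjoint (Set.range E.σ1) (Set.range E.σI) := h1 _ (by simp)
  have d1Ic : Disjoint (Set.range E.σ1) (Set.range E.σIc) := h1 _ (by simp)
  have d1Q : Disjoint (Set.range E.σ1) (Set.range E.σQ) := h1 _ (by simp)
  have d2Ic : Disjoint (Set.range E.σ2) (Set.range E.σIc) := h2 _ (by simp)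
  have dQIc : Disjoint (Set.range E.σQ) (Set.range E.σIc) := h3 _ (by simp)
  have dIIc : Disjoint (Set.range E.σI) (Set.range E.σIc) := h4 _ (by simp)
  have ne_Ic1 : ∀ n, E.σIc x ≠ E.σ1 n := fun n h => by
    exact Set.disjoint_left.1 d1Ic ⟨n, h.symm⟩ ⟨x, rfl⟩
  have ne_Ic2 : E.σIc x ≠ E.σ2 m2 := fun h => by
    exact Set.disjoint_left.1 d2Ic ⟨m2, h.symm⟩ ⟨x, rfl⟩
  have ne_IcI : E.σIc x ∉ Set.range E.σI := fun h =>
    Set.disjoint_left.1 dIIc h ⟨x, rfl⟩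
  have ne_12 : ∀ n, E.σ1 n ≠ E.σ2 m2 := fun n h => by
    exact Set.disjoint_left.1 d12 ⟨n, rfl⟩ ⟨m2, h.symm⟩
  have ne_1I : ∀ n, E.σ1 n ∉ Set.range E.σI := fun n h =>
    Set.disjoint_left.1 d1I ⟨n, rfl⟩ h
  have ne_1Q : ∀ n, E.σ1 n ≠ E.σQ q2 := fun n h =>
    Set.disjoint_left.1 d1Q ⟨n, rfl⟩ ⟨q2, h.symm⟩
  have ne_QIc : E.σQ q2 ≠ E.σIc x := fun h =>
    Set.disjoint_left.1 dQIc ⟨q2, rfl⟩ ⟨x, h.symm⟩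
  -- memberships in A1
  have hIcA1 : E.σIc x ∈ A1 := by simp [hA1, encStateC]
  have h1A1 : E.σ1 m1 ∈ A1 := by simp [hA1, encStateC]
  -- Γ ⊆ gamma
  have hsub : Γ ⊆ E.toAPA.gamma Ax A1 := by
    intro t ht
    have hnoatk : ∀ b ∈ Ax, ¬ E.toAPA.Attacks A1 b t.1 := by
      intro b _ hatk
      have := hatk.2.2
      rw [E.R_empty] at this
      exact this
    rcases ht with ht | ht
    · subst ht
      refine ⟨?_, hIcA1, ?_, hnoatk⟩
      · rw [E.Rp_spec]
        exact Or.inr (Or.inl ⟨x, m1, rfl, by simp [sigC, hxdef]⟩)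
      · rintro a ha
        simp at ha
        rw [← ha]; exact h1A1
    · simp only [Set.mem_singleton_iff] at ht
      subst ht
      refine ⟨?_, h1A1, ?_, hnoatk⟩
      · rw [E.Rp_spec]
        refine Or.inr (Or.inr (Or.inr (Or.inl ⟨x, m1, rfl, ?_⟩)))
        simp [sigC, hxdef]
      · rintro a ha
        simp at ha
        rw [← ha]; exact hIcA1
  refine ⟨⟨_, Or.inl rfl⟩, hsub, ?_⟩
  -- compute neg and pos
  have hneg : APA.neg A1 Γ = {E.σ1 m1, E.σIc x} := by
    ext a
    constructor
    · rintro ⟨-, a1, ha1, a2, hΓmem⟩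
      rcases hΓmem with h | h
      · rw [Prod.ext_iff] at h
        simp only [Prod.ext_iff, Option.some.injEq] at h
        exact Or.inl h.2.1
      · simp only [Set.mem_singleton_iff, Prod.ext_iff, Option.some.injEq] at h
        exact Or.inr h.2.1
    · rintro (rfl | rfl)
      · exact ⟨h1A1, E.σIc x, hIcA1, E.σ1 (m1 + 1), Or.inl rfl⟩
      · exact ⟨hIcA1, E.σ1 m1, h1A1, E.σQ q2, Or.inr rfl⟩
  have hpos : APA.pos A1 Γ = {E.σ1 (m1 + 1), E.σQ q2} := by
    ext a
    constructor
    · rintro ⟨a1, ha1, m, hm, hΓmem⟩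
      rcases hΓmem with h | h
      · rw [Prod.ext_iff] at h
        simp only [Prod.ext_iff] at h
        exact Or.inl h.2.2
      · simp only [Set.mem_singleton_iff, Prod.ext_iff] at h
        exact Or.inr h.2.2
    · rintro (rfl | rfl)
      · exact ⟨E.σIc x, hIcA1, some (E.σ1 m1),
          by rintro b hb; simp at hb; rw [← hb]; exact h1A1, Or.inl rfl⟩
      · exact ⟨E.σ1 m1, h1A1, some (E.σIc x),
          by rintro b hb; simp at hb; rw [← hb]; exact hIcA1, Or.inr rfl⟩
  rw [hneg, hpos]
  ext a
  simp only [hA1, encStateC, encState, Set.mem_union, Set.mem_diff,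
    Set.mem_insert_iff, Set.mem_singleton_iff, Set.mem_range]
  constructor
  · intro hyp
    rcases hyp with ⟨i, hi⟩ | h | h | h
    · refine Or.inl ⟨Or.inl ⟨i, hi⟩, ?_⟩
      rintro (h | h)
      · exact ne_1I m1 ⟨i, hi.trans h⟩
      · exact ne_IcI ⟨i, hi.trans h⟩
    · exact Or.inr (Or.inr h)
    · exact Or.inr (Or.inl h)
    · refine Or.inl ⟨Or.inr (Or.inr (Or.inr h)), ?_⟩
      rintro (h' | h')
      · exact ne_12 m1 (h'.symm.trans h)
      · exact ne_Ic2 (h'.symm.trans h)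
  · intro hyp
    rcases hyp with ⟨hmem, hne⟩ | hp
    · rcases hmem with ⟨i, hi⟩ | h | h | h
      · exact Or.inl ⟨i, hi⟩
      · exact absurd (Or.inr h) hne
      · exact absurd (Or.inl h) hne
      · exact Or.inr (Or.inr (Or.inr h))
    · rcases hp with h | h
      · exact Or.inr (Or.inr (Or.inl h))
      · exact Or.inr (Or.inl h)
end

section
/- Let M be a two-counter Minsky machine with instruction set I and let (A, R, Rp, A0, ↪) be its APA encoding. If x = (q1, 1, q2, q3) ∈ I, then for all m1 ≥ 1, all m2 ∈ ℕ, and every reference set Ax ⊆ A there is a single APA transition F(A^I ∪ {σIc(x), σ1(m1), σ2(m2)}) ↪^{Ax} F(A^I ∪ {σQ(q3), σ1(m1−1), σ2(m2)}), obtained by executing the two conversions (σIc(x), σ1(m1), σ1(m1−1)) and (σ1(m1), σIc(x), σQ(q3)) simultaneously. -/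
/-- for the instruction `x = (q1, 1, q2, q3)` and `m1 ≥ 1`, the
single APA transition from `F(A^I ∪ {σIc x, σ1 m1, σ2 m2})` to
`F(A^I ∪ {σQ q3, σ1 (m1-1), σ2 m2})` obtained by executing the two conversions
`(σIc x, σ1 m1, σ1 (m1-1))` and `(σ1 m1, σIc x, σQ q3)` simultaneously. -/
theorem second_phase_decrement_transition {Q α : Type*} [Finite Q]
    (M : Minsky Q) (E : Encoding M α) (q1 q2 q3 : Q)
    (hx : (q1, 1, q2, some q3) ∈ M.I) (m1 : ℕ) (hm1 : 1 ≤ m1) (m2 : ℕ)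
    (Ax : Set α) :
    E.toAPA.TransVia Ax
      {(E.σIc ⟨(q1, 1, q2, some q3), hx⟩, some (E.σ1 m1), E.σ1 (m1 - 1)),
       (E.σ1 m1, some (E.σIc ⟨(q1, 1, q2, some q3), hx⟩), E.σQ q3)}
      (encStateC E ⟨(q1, 1, q2, some q3), hx⟩ m1 m2)
      (encState E q3 (m1 - 1) m2) := by
  classical
  set x : M.I := ⟨(q1, 1, q2, some q3), hx⟩ with hxdef
  set A1 : Set α := encStateC E x m1 m2 with hA1
  have hIc : E.σIc x ∈ A1 := by simp [hA1, encStateC]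
  have h1 : E.σ1 m1 ∈ A1 := by simp [hA1, encStateC]
  have hd := E.disjoint_ranges
  simp only [List.pairwise_cons, List.mem_cons, List.not_mem_nil, or_false,
    forall_eq_or_imp, forall_eq, List.Pairwise.nil, and_true] at hd
  obtain ⟨⟨d12, dQ1, d1I, d1Ic⟩, ⟨d2Q, d2I, d2Ic⟩, ⟨dQI, dQIc⟩, dIIc⟩ := hd
  have f1Ic : ∀ n, E.σ1 n ≠ E.σIc x := fun n h =>
    Set.disjoint_left.mp d1Ic ⟨n, rfl⟩ (h ▸ ⟨x, rfl⟩)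
  have f1I : ∀ n, E.σ1 n ∉ Set.range E.σI := fun n h =>
    Set.disjoint_left.mp d1I ⟨n, rfl⟩ h
  have f2Ic : E.σ2 m2 ≠ E.σIc x := fun h =>
    Set.disjoint_left.mp d2Ic ⟨m2, rfl⟩ (h ▸ ⟨x, rfl⟩)
  have f21 : E.σ2 m2 ≠ E.σ1 m1 := fun h =>
    Set.disjoint_left.mp d12 ⟨m1, rfl⟩ ⟨m2, h⟩
  have fIcI : E.σIc x ∉ Set.range E.σI := fun h =>
    Set.disjoint_left.mp dIIc.1 h ⟨x, rfl⟩
  have noatt : ∀ a : α, ∀ b ∈ Ax, ¬ E.toAPA.Attacks A1 b a := by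
    intro a b _ h
    have := h.2.2
    rw [E.R_empty] at this
    exact this
  refine ⟨⟨_, Or.inl rfl⟩, ?_, ?_⟩
  · intro t ht
    simp only [Set.mem_insert_iff, Set.mem_singleton_iff] at ht
    rcases ht with rfl | rfl
    · refine ⟨?_, hIc, ?_, noatt _⟩
      · rw [E.Rp_spec]
        exact Or.inr (Or.inr (Or.inl ⟨x, m1, hm1, ⟨q3, rfl⟩, by simp [sigC, hxdef]⟩))
      · rintro a ⟨rfl⟩; exact h1
    · refine ⟨?_, h1, ?_, noatt _⟩
      · rw [E.Rp_spec]
        exact Or.inr (Or.inr (Or.inr (Or.inr (Or.inl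
          ⟨x, m1, hm1, q3, rfl, by simp [sigC, hxdef]⟩))))
      · rintro a ⟨rfl⟩; exact hIc
  · ext a
    simp only [encState, Set.mem_union, Set.mem_insert_iff, Set.mem_singleton_iff]
    constructor
    · rintro (hI | rfl | rfl | rfl)
      · refine Or.inl ⟨Or.inl hI, ?_⟩
        rintro ⟨-, a1, -, a2, hmem⟩
        simp only [Set.mem_insert_iff, Set.mem_singleton_iff, Prod.mk.injEq] at hmem
        rcases hmem with ⟨-, hsome, -⟩ | ⟨-, hsome, -⟩
        · exact f1I m1 ((Option.some.inj hsome.symm) ▸ hI)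
        · exact fIcI ((Option.some.inj hsome.symm) ▸ hI)
      · exact Or.inr ⟨E.σ1 m1, h1, some (E.σIc x),
          fun b hb => by cases hb; exact hIc, Or.inr rfl⟩
      · exact Or.inr ⟨E.σIc x, hIc, some (E.σ1 m1),
          fun b hb => by cases hb; exact h1, Or.inl rfl⟩
      · refine Or.inl ⟨by simp [hA1, encStateC], ?_⟩
        rintro ⟨-, a1, -, a2, hmem⟩
        simp only [Set.mem_insert_iff, Set.mem_singleton_iff, Prod.mk.injEq] at hmem
        rcases hmem with ⟨-, hsome, -⟩ | ⟨-, hsome, -⟩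
        · exact f21 (Option.some.inj hsome)
        · exact f2Ic (Option.some.inj hsome)
    · rintro (⟨ha, hn⟩ | hp)
      · rcases ha with hI | ha
        · exact Or.inl hI
        · simp only [Set.mem_insert_iff, Set.mem_singleton_iff] at ha
          rcases ha with rfl | rfl | rfl
          · exact absurd ⟨hIc, E.σ1 m1, h1, E.σQ q3, Or.inr rfl⟩ hn
          · exact absurd ⟨h1, E.σIc x, hIc, E.σ1 (m1 - 1), Or.inl rfl⟩ hn
          · exact Or.inr (Or.inr (Or.inr rfl))
      · obtain ⟨a1, ha1, m, hm, hmem⟩ := hp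
        simp only [Set.mem_insert_iff, Set.mem_singleton_iff, Prod.mk.injEq] at hmem
        rcases hmem with ⟨-, -, rfl⟩ | ⟨-, -, rfl⟩
        · exact Or.inr (Or.inr (Or.inl rfl))
        · exact Or.inr (Or.inl rfl)
end

section
/- Let M be a two-counter Minsky machine with instruction set I and let (A, R, Rp, A0, ↪) be its APA encoding. If x = (q1, 1, q2, q3) ∈ I, then for all m2 ∈ ℕ and every reference set Ax ⊆ A there is a single APA transition F(A^I ∪ {σIc(x), σ1(0), σ2(m2)}) ↪^{Ax} F(A^I ∪ {σQ(q2), σ1(0), σ2(m2)}), obtained by the conversion (σ1(0), σIc(x), σQ(q2)) ∈ Rp; in particular the counter-argument σ1(0) remains visible. -/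
/-- for the instruction `x = (q1, 1, q2, q3)`, the single APA
transition from `F(A^I ∪ {σIc x, σ1 0, σ2 m2})` to `F(A^I ∪ {σQ q2, σ1 0, σ2 m2})`
obtained by the conversion `(σ1 0, σIc x, σQ q2) ∈ Rp`; in particular the
counter-argument `σ1 0` remains visible. -/
theorem second_phase_zero_test_transition {Q α : Type*} [Finite Q]
    (M : Minsky Q) (E : Encoding M α) (q1 q2 q3 : Q)
    (hx : (q1, 1, q2, some q3) ∈ M.I) (m2 : ℕ) (Ax : Set α) :
    E.toAPA.TransVia Ax
      {(E.σ1 0, some (E.σIc ⟨(q1, 1, q2, some q3), hx⟩), E.σQ q2)}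
      (encStateC E ⟨(q1, 1, q2, some q3), hx⟩ 0 m2)
      (encState E q2 0 m2) ∧
    E.σ1 0 ∈ encState E q2 0 m2 := by
  set x : M.I := ⟨(q1, 1, q2, some q3), hx⟩ with hxdef
  have hdisj := E.disjoint_ranges
  simp only [List.pairwise_cons, List.mem_cons, List.mem_singleton,
    List.not_mem_nil, List.Pairwise] at hdisj
  -- disjointness facts
  obtain ⟨h1, h2, -, h4, -⟩ := hdisj
  have d1Ic : Disjoint (Set.range E.σ1) (Set.range E.σIc) :=
    h1 _ (Or.inr (Or.inr (Or.inr (Or.inl rfl))))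
  have d2Ic : Disjoint (Set.range E.σ2) (Set.range E.σIc) :=
    h2 _ (Or.inr (Or.inr (Or.inl rfl)))
  have dIIc : Disjoint (Set.range E.σI) (Set.range E.σIc) :=
    h4 _ (Or.inl rfl)
  have hIcI : E.σIc x ∉ Set.range E.σI := fun h =>
    dIIc.ne_of_mem h (Set.mem_range_self x) rfl
  have hIc1 : E.σ1 0 ≠ E.σIc x := fun h =>
    d1Ic.ne_of_mem (Set.mem_range_self 0) (Set.mem_range_self x) h
  have hIc2 : E.σ2 m2 ≠ E.σIc x := fun h =>
    d2Ic.ne_of_mem (Set.mem_range_self m2) (Set.mem_range_self x) h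
  have h1A1 : E.σ1 0 ∈ encStateC E x 0 m2 := by
    simp [encStateC]
  have hIcA1 : E.σIc x ∈ encStateC E x 0 m2 := by
    simp [encStateC]
  refine ⟨⟨⟨_, rfl⟩, ?_, ?_⟩, ?_⟩
  · -- Γ ⊆ gamma
    rintro t ht
    simp only [Set.mem_singleton_iff] at ht
    subst ht
    refine ⟨?_, h1A1, ?_, ?_⟩
    · rw [E.Rp_spec]
      right; right; right; right; right
      exact ⟨x, q3, rfl, by simp [sigC, hxdef]⟩
    · rintro a ha
      simp only [Option.some.injEq] at ha
      subst ha; exact hIcA1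
    · intro b _ hatt
      have := hatt.2.2
      rw [E.R_empty] at this
      exact this
  · -- A2 equality
    have hneg : APA.neg (encStateC E x 0 m2)
        {(E.σ1 0, some (E.σIc x), E.σQ q2)} = {E.σIc x} := by
      ext a
      constructor
      · rintro ⟨-, a1, -, a2, h⟩
        simp only [Set.mem_singleton_iff, Prod.mk.injEq, Option.some.injEq] at h
        simp [h.2.1.symm]
      · rintro rfl
        exact ⟨hIcA1, E.σ1 0, h1A1, E.σQ q2, rfl⟩
    have hpos : APA.pos (encStateC E x 0 m2)
        {(E.σ1 0, some (E.σIc x), E.σQ q2)} = {E.σQ q2} := by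
      ext a
      constructor
      · rintro ⟨a1, -, m, -, h⟩
        simp only [Set.mem_singleton_iff, Prod.mk.injEq, Option.some.injEq] at h
        simp [h.2.2.symm]
      · rintro rfl
        exact ⟨E.σ1 0, h1A1, some (E.σIc x),
          by rintro a ha; simp only [Option.some.injEq] at ha; subst ha; exact hIcA1, rfl⟩
    rw [hneg, hpos]
    ext a
    simp only [encState, encStateC, Set.mem_union, Set.mem_diff,
      Set.mem_insert_iff, Set.mem_singleton_iff]
    constructor
    · rintro (h | rfl | rfl | rfl)
      · exact Or.inl ⟨Or.inl h, fun he => hIcI (he ▸ h)⟩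
      · exact Or.inr rfl
      · exact Or.inl ⟨Or.inr (Or.inr (Or.inl rfl)), hIc1⟩
      · exact Or.inl ⟨Or.inr (Or.inr (Or.inr rfl)), hIc2⟩
    · rintro (⟨h, hne⟩ | rfl)
      · rcases h with h | rfl | rfl | rfl
        · exact Or.inl h
        · exact absurd rfl hne
        · exact Or.inr (Or.inr (Or.inl rfl))
        · exact Or.inr (Or.inr (Or.inr rfl))
      · exact Or.inr (Or.inl rfl)
  · simp [encState]
end
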